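/- Let F̄(x) = exp(−γ x^β) for x > 0, with γ > 0 and 0 < β < 1 (Weibull tail). Then for a nondecreasing function h with h(x) → ∞ and h(x) < x/2, F̄(x − h(x)) ∼ F̄(x) holds if and only if h(x) = o(x^{1−β}). -/

import Mathlib

open Filter

/-- Key bounds: for `x > 0`, `β * (h/x^(1-β)) ≤ x^β - (x-h)^β ≤ β * 2^(1-β) * (h/x^(1-β))`. -/
lemma weibull_key_bounds (β : ℝ) (hβ0 : 0 < β) (hβ1 : β < 1) (x t : ℝ) (hx : 0 < x)
    (ht : 0 < t) (ht2 : t < x / 2) :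
    β * (t / x ^ (1 - β)) ≤ x ^ β - (x - t) ^ β ∧
      x ^ β - (x - t) ^ β ≤ β * 2 ^ (1 - β) * (t / x ^ (1 - β)) := by
  have hs : 0 < x - t := by linarith
  have hxβ : (0:ℝ) < x ^ β := Real.rpow_pos_of_pos hx β
  have hx1β : (0:ℝ) < x ^ (1 - β) := Real.rpow_pos_of_pos hx _
  constructor
  · -- lower bound: (x-t)^β ≤ x^β - β * t * x^(β-1)
    have hb : (1 + (-(t / x))) ^ β ≤ 1 + β * (-(t / x)) :=
      rpow_one_add_le_one_add_mul_self (by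
        have : t / x ≤ 1 := by
          rw [div_le_one hx]; linarith
        linarith) hβ0.le hβ1.le
    have hrw : x - t = x * (1 + (-(t / x))) := by
      field_simp; ring
    have h1 : (x - t) ^ β ≤ x ^ β * (1 + β * (-(t / x))) := by
      have htx : t / x < 1 := (div_lt_one hx).mpr (by linarith)
      rw [hrw, Real.mul_rpow hx.le (by linarith)]
      exact mul_le_mul_of_nonneg_left hb hxβ.le
    have h2 : x ^ β * (1 + β * (-(t / x))) = x ^ β - β * t * (x ^ β / x) := by
      field_simp; ring
    rw [h2] at h1
    have h3 : x ^ β / x = 1 / x ^ (1 - β) := by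
      rw [div_eq_div_iff hx.ne' hx1β.ne', ← Real.rpow_add hx, one_mul,
        show β + (1 - β) = 1 by ring, Real.rpow_one]
    rw [h3] at h1
    have : β * (t / x ^ (1 - β)) = β * t * (1 / x ^ (1 - β)) := by ring
    rw [this]; linarith
  · -- upper bound: x^β ≤ (x-t)^β + β * t * (x-t)^(β-1)
    have hb : (1 + t / (x - t)) ^ β ≤ 1 + β * (t / (x - t)) :=
      rpow_one_add_le_one_add_mul_self (by
        have : (0:ℝ) ≤ t / (x - t) := by positivity
        linarith) hβ0.le hβ1.le
    have hrw : x = (x - t) * (1 + t / (x - t)) := by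
      field_simp; ring
    have h1 : x ^ β ≤ (x - t) ^ β * (1 + β * (t / (x - t))) := by
      conv_lhs => rw [hrw]
      rw [Real.mul_rpow hs.le (by positivity)]
      exact mul_le_mul_of_nonneg_left hb (Real.rpow_pos_of_pos hs β).le
    have h2 : (x - t) ^ β * (1 + β * (t / (x - t))) =
        (x - t) ^ β + β * t * ((x - t) ^ β / (x - t)) := by
      field_simp
    rw [h2] at h1
    have h3 : (x - t) ^ β / (x - t) = (x - t) ^ (β - 1) := by
      rw [Real.rpow_sub hs, Real.rpow_one]
    rw [h3] at h1
    -- (x-t)^(β-1) ≤ (x/2)^(β-1)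
    have h4 : (x - t) ^ (β - 1) ≤ (x / 2) ^ (β - 1) :=
      Real.rpow_le_rpow_of_nonpos (by positivity) (by linarith) (by linarith)
    have h5 : (x / 2) ^ (β - 1) = 2 ^ (1 - β) / x ^ (1 - β) := by
      rw [Real.div_rpow hx.le (by norm_num), show β - 1 = -(1 - β) by ring,
        Real.rpow_neg hx.le, Real.rpow_neg (by norm_num : (0:ℝ) ≤ 2)]
      field_simp
    have h6 : β * t * ((x - t) ^ (β - 1)) ≤ β * t * (2 ^ (1 - β) / x ^ (1 - β)) := by
      rw [← h5]
      exact mul_le_mul_of_nonneg_left h4 (by positivity)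
    have : β * 2 ^ (1 - β) * (t / x ^ (1 - β)) = β * t * (2 ^ (1 - β) / x ^ (1 - β)) := by
      ring
    rw [this]; linarith

/-- Weibull tail `F̄(x) = exp(−γ x^β)`, `0 < β < 1`, `γ > 0`:
for nondecreasing `h` with `h → ∞` and `h(x) < x/2`,
`F̄(x − h(x)) ∼ F̄(x)` iff `h(x) = o(x^{1−β})`. -/
theorem weibull_boundary_class
    (γ β : ℝ) (hγ : 0 < γ) (hβ0 : 0 < β) (hβ1 : β < 1)
    (h : ℝ → ℝ) (hh_mono : Monotone h)
    (hh_tendsto : Tendsto h atTop atTop)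
    (hh_lt : ∀ x : ℝ, 0 < x → 0 < h x ∧ h x < x / 2) :
    Tendsto
      (fun x => Real.exp (-γ * (x - h x) ^ β) / Real.exp (-γ * x ^ β))
      atTop (nhds 1) ↔
    Tendsto (fun x => h x / x ^ (1 - β)) atTop (nhds 0) := by
  set G : ℝ → ℝ := fun x => x ^ β - (x - h x) ^ β with hG
  have hratio : (fun x => Real.exp (-γ * (x - h x) ^ β) / Real.exp (-γ * x ^ β))
      = fun x => Real.exp (γ * G x) := by
    funext x
    rw [← Real.exp_sub]
    congr 1
    simp only [hG]; ring
  have hbounds : ∀ᶠ x in atTop, β * (h x / x ^ (1 - β)) ≤ G x ∧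
      G x ≤ β * 2 ^ (1 - β) * (h x / x ^ (1 - β)) := by
    filter_upwards [eventually_gt_atTop (0:ℝ)] with x hx
    exact weibull_key_bounds β hβ0 hβ1 x (h x) hx (hh_lt x hx).1 (hh_lt x hx).2
  -- ratio → 1 ↔ G → 0
  have hiff : Tendsto (fun x => Real.exp (γ * G x)) atTop (nhds 1) ↔
      Tendsto G atTop (nhds 0) := by
    constructor
    · intro H
      have hlog : Tendsto (fun x => Real.log (Real.exp (γ * G x))) atTop (nhds (Real.log 1)) :=
        (Real.continuousAt_log one_ne_zero).tendsto.comp H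
      simp only [Real.log_exp, Real.log_one] at hlog
      have := hlog.const_mul γ⁻¹
      simp only [mul_zero] at this
      have heq : (fun x => γ⁻¹ * (γ * G x)) = G := by
        funext x; field_simp
      rwa [heq] at this
    · intro H
      have : Tendsto (fun x => γ * G x) atTop (nhds (γ * 0)) := H.const_mul γ
      rw [mul_zero] at this
      have := Real.continuous_exp.continuousAt.tendsto.comp this
      rw [Real.exp_zero] at this; exact this
  rw [hratio, hiff]
  constructor
  · intro H
    have H' : Tendsto (fun x => β⁻¹ * G x) atTop (nhds 0) := by
      simpa using H.const_mul β⁻¹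
    refine tendsto_of_tendsto_of_tendsto_of_le_of_le' tendsto_const_nhds H' ?_ ?_
    · filter_upwards [eventually_gt_atTop (0:ℝ)] with x hx
      have h1 := (hh_lt x hx).1
      have h2 : (0:ℝ) < x ^ (1 - β) := Real.rpow_pos_of_pos hx _
      positivity
    · filter_upwards [hbounds] with x hx
      rw [le_inv_mul_iff₀ hβ0]
      linarith [hx.1]
  · intro H
    have H' : Tendsto (fun x => β * 2 ^ (1 - β) * (h x / x ^ (1 - β))) atTop (nhds 0) := by
      simpa using H.const_mul (β * 2 ^ (1 - β))
    refine tendsto_of_tendsto_of_tendsto_of_le_of_le' tendsto_const_nhds H' ?_ ?_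
    · filter_upwards [hbounds, eventually_gt_atTop (0:ℝ)] with x hx hx0
      have h1 := (hh_lt x hx0).1
      have h2 : (0:ℝ) < x ^ (1 - β) := Real.rpow_pos_of_pos hx0 _
      exact (mul_pos hβ0 (div_pos h1 h2)).le.trans hx.1
    · filter_upwards [hbounds] with x hx
      exact hx.2
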